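/- On S² ⊂ ℝ³, the spherical carré du champ of O₃ = xyz and O₄ = x⁴+y⁴+z⁴ satisfies Γ(O₃,O₃) = (1−O₄)/2 − 9O₃², Γ(O₃,O₄) = 4O₃(1−3O₄), and Γ(O₄,O₄) = 8(6O₃² + 3O₄ − 1 − 2O₄²), modulo x²+y²+z²−1. -/
import Mathlib


open MvPolynomial

/-- The spherical carré du champ operator on polynomials in three variables:
`Γ(f,g) = ∇f·∇g − (x·∇f)(x·∇g)`. -/
noncomputable def sphGamma (f g : MvPolynomial (Fin 3) ℝ) : MvPolynomial (Fin 3) ℝ :=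
  (∑ i : Fin 3, pderiv i f * pderiv i g)
    - (∑ i : Fin 3, X i * pderiv i f) * (∑ i : Fin 3, X i * pderiv i g)

theorem stmt13 (x y z : ℝ) (h : x ^ 2 + y ^ 2 + z ^ 2 = 1) :
    let O₃ : MvPolynomial (Fin 3) ℝ := X 0 * X 1 * X 2
    let O₄ : MvPolynomial (Fin 3) ℝ := X 0 ^ 4 + X 1 ^ 4 + X 2 ^ 4
    let ev : MvPolynomial (Fin 3) ℝ → ℝ := eval ![x, y, z]
    ev (sphGamma O₃ O₃) = (1 - ev O₄) / 2 - 9 * (ev O₃) ^ 2 ∧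
    ev (sphGamma O₃ O₄) = 4 * ev O₃ * (1 - 3 * ev O₄) ∧
    ev (sphGamma O₄ O₄) = 8 * (6 * (ev O₃) ^ 2 + 3 * ev O₄ - 1 - 2 * (ev O₄) ^ 2) := by
  intro O₃ O₄ ev
  simp only [O₃, O₄, ev, sphGamma, Fin.sum_univ_three, map_sub, map_add, map_mul, map_pow,
    pderiv_X_self, pderiv_mul, pderiv_X, pderiv_pow, eval_X, eval_add, eval_mul, eval_pow,
    Matrix.cons_val_zero, Matrix.cons_val_one, Matrix.head_cons, Matrix.cons_val_two,
    Matrix.tail_cons, Pi.single_apply]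
  norm_num [Fin.ext_iff]
  refine ⟨by linear_combination ((x^2+y^2+z^2+1)/2)*h, by linear_combination (4*x*y*z)*h, by linear_combination (16*(x^4+y^4+z^4) - 16*(x^2*y^2+x^2*z^2+y^2*z^2) - 8*(x^2+y^2+z^2) - 8)*h⟩
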